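/- Let A be a ternary Jordan algebra over a field F with char F ≠ 2, 3. Then the quasicentroid QΓ(A) is closed under the anticommutator product f • g = f∘g + g∘f, and (QΓ(A), •) is a Jordan algebra: • is commutative and satisfies the Jordan identity (f•f)•(g•f) = ((f•f)•g)•f for all f, g ∈ QΓ(A). -/
import Mathlib


/-- A ternary Jordan algebra structure: a totally symmetric trilinear multiplication
`t` on a vector space such that every commutator of right multiplication operators
is a derivation. -/
structure IsTernaryJordan (F : Type*) [Field F] {A : Type*} [AddCommGroup A]
    [Module F A] (t : A → A → A → A) : Prop where
  add_left : ∀ x y z w : A, t (x + y) z w = t x z w + t y z w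
  smul_left : ∀ (c : F) (x y z : A), t (c • x) y z = c • t x y z
  symm12 : ∀ x y z : A, t x y z = t y x z
  symm23 : ∀ x y z : A, t x y z = t x z y
  comm_der : ∀ x₂ x₃ y₂ y₃ a b c : A,
    t (t (t a b c) x₂ x₃) y₂ y₃ - t (t (t a b c) y₂ y₃) x₂ x₃ =
      t (t (t a x₂ x₃) y₂ y₃ - t (t a y₂ y₃) x₂ x₃) b c +
        t a (t (t b x₂ x₃) y₂ y₃ - t (t b y₂ y₃) x₂ x₃) c +
          t a b (t (t c x₂ x₃) y₂ y₃ - t (t c y₂ y₃) x₂ x₃)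
/-- Membership in the quasicentroid of the ternary algebra `(A, t)`. -/
def IsQCent (F : Type*) [Field F] {A : Type*} [AddCommGroup A] [Module F A]
    (t : A → A → A → A) (f : A →ₗ[F] A) : Prop :=
  ∀ x y z : A, t (f x) y z = t x (f y) z ∧ t x (f y) z = t x y (f z)

/-- The anticommutator product on linear endomorphisms. -/
def jmul {F : Type*} [Field F] {A : Type*} [AddCommGroup A] [Module F A]
    (f g : A →ₗ[F] A) : A →ₗ[F] A :=
  f ∘ₗ g + g ∘ₗ f

/-- the quasicentroid is closed under the anticommutator
`f • g = fg + gf`, and `(QΓ(A), •)` is a Jordan algebra. -/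
theorem stmt13 {F : Type*} [Field F] {A : Type*} [AddCommGroup A] [Module F A]
    (h2 : (2 : F) ≠ 0) (h3 : (3 : F) ≠ 0)
    (t : A → A → A → A) (ht : IsTernaryJordan F t) :
    (∀ f g : A →ₗ[F] A, IsQCent F t f → IsQCent F t g → IsQCent F t (jmul f g)) ∧
    (∀ f g : A →ₗ[F] A, IsQCent F t f → IsQCent F t g → jmul f g = jmul g f) ∧
    (∀ f g : A →ₗ[F] A, IsQCent F t f → IsQCent F t g →
      jmul (jmul f f) (jmul g f) = jmul (jmul (jmul f f) g) f) := by

  have add2 : ∀ x y z w : A, t x (y + z) w = t x y w + t x z w := fun x y z w => by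
    rw [ht.symm12, ht.add_left, ht.symm12 y, ht.symm12 z]
  refine ⟨?_, ?_, ?_⟩
  · intro f g hf hg x y z
    have e1 : t (f (g x)) y z = t x (g (f y)) z :=
      ((hf (g x) y z).1).trans ((hg x (f y) z).1)
    have e2 : t (g (f x)) y z = t x (f (g y)) z :=
      ((hg (f x) y z).1).trans ((hf x (g y) z).1)
    have e3 : t x (f (g y)) z = t x y (g (f z)) :=
      ((hf x (g y) z).2).trans ((hg x y (f z)).2)
    have e4 : t x (g (f y)) z = t x y (f (g z)) :=
      ((hg x (f y) z).2).trans ((hf x y (g z)).2)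
    simp only [jmul, LinearMap.add_apply, LinearMap.comp_apply]
    constructor
    · rw [ht.add_left, add2, e1, e2, add_comm]
    · have add3 : ∀ x y z w : A, t x y (z + w) = t x y z + t x y w := fun x y z w => by
        rw [ht.symm23 x y, add2, ht.symm23 x z, ht.symm23 x w]
      rw [add2, add3, e3, e4, add_comm]
  · intro f g _ _
    show f ∘ₗ g + g ∘ₗ f = g ∘ₗ f + f ∘ₗ g
    exact add_comm _ _
  · intro f g _ _
    show ((f * f + f * f) * (g * f + f * g) + (g * f + f * g) * (f * f + f * f) : Module.End F A)
      = ((f * f + f * f) * g + g * (f * f + f * f)) * f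
        + f * ((f * f + f * f) * g + g * (f * f + f * f))
    noncomm_ring
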